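/- Fix integers 0 < n₁ ≤ n₂ ≤ … ≤ n_m and let R be a DL-dense array on Y_n̄. Set d_j = vrt(R)_j for j = 1,…,m, and define compositions μ^{(j)} ∈ Z_{≥0}^{n_j} by μ^{(j)}_i = Σ_{a=1}^{j} R_{i,a}. Then μ^{(j)} ∈ Ser^{n_j}_{d_j, μ^{(j−1)}} for every j = 1,…,m (with μ^{(0)} = (0) and each μ^{(j−1)} extended by trailing zeros to length n_j). -/

import Mathlib

/-- A composition of length `nn` is encoded as a function `ℕ → ℕ` vanishing from
index `nn` on (0-based indexing).  `IsSerpentine nn d lam mu` says that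
`mu ∈ Ser^nn_{d,lam}` is a `d`-serpentine associated with `lam`. -/
def IsSerpentine (nn d : ℕ) (lam mu : ℕ → ℕ) : Prop :=
  (∀ i, nn ≤ i → lam i = 0) ∧
  (∀ i, nn ≤ i → mu i = 0) ∧
  (∀ i, lam i ≤ mu i) ∧
  (∑ i ∈ Finset.range nn, (mu i - lam i)) = d ∧
  (∀ i j, i < j → j < nn → lam i ≤ lam j → mu i ≤ lam j) ∧
  (∀ i j, i < j → j < nn → lam j < lam i → lam i ≤ mu j → mu i = lam i)

/-- `domSum f s` is the sum of the `s` largest entries of a (finitely supported)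
function `f : ℕ → ℕ`, i.e. the `s`-th partial sum of the dominant part `f₊`. -/
noncomputable def domSum (f : ℕ → ℕ) (s : ℕ) : ℕ :=
  sSup ((fun T : Finset ℕ => ∑ i ∈ T, f i) '' {T : Finset ℕ | T.card ≤ s})

/-- `f₊ = g₊`: the dominant parts (non-increasing reorderings, padded by trailing
zeros) of the finitely supported functions `f` and `g` coincide. -/
def DomEq (f g : ℕ → ℕ) : Prop := ∀ s, domSum f s = domSum g s

/-- `f₊ ≤ g₊` in the dominance order: `|f| = |g|` and every partial sum of the
dominant part of `g` is at least the corresponding one for `f`. -/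
def DomLE (f g : ℕ → ℕ) : Prop :=
  (∀ s, domSum f s ≤ domSum g s) ∧ ∃ N, ∀ s, N ≤ s → domSum f s = domSum g s

/-- The composition `(λ, d)`: append the entry `d` to a length-`n` composition. -/
def appendComp (n : ℕ) (lam : ℕ → ℕ) (d : ℕ) : ℕ → ℕ :=
  fun i => if i < n then lam i else if i = n then d else 0

/-- The composition `(d₁, …, d_m)`: truncate `d` to its first `m` entries. -/
def truncComp (m : ℕ) (d : ℕ → ℕ) : ℕ → ℕ := fun i => if i < m then d i else 0

/-- A chain of iterated serpentines `μ⁽⁰⁾ = (0)`, `μ⁽ʲ⁾ ∈ Ser^{n_j}_{d_j, μ⁽ʲ⁻¹⁾}`. -/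
def SerpChain (n : ℕ → ℕ) (m : ℕ) (d : ℕ → ℕ) (μ : ℕ → ℕ → ℕ) : Prop :=
  (∀ i, μ 0 i = 0) ∧ ∀ j, j < m → IsSerpentine (n j) (d j) (μ j) (μ (j + 1))

/-- `d̄ ∈ Z_{≥0}^m` is `n̄`-admissible: for each `s < m` the number of nonzero
entries among `d_0, …, d_s` is at most `n_s`. -/
def NAdmissible (n : ℕ → ℕ) (m : ℕ) (d : ℕ → ℕ) : Prop :=
  ∀ s, s < m → ((Finset.range (s + 1)).filter (fun j => d j ≠ 0)).card ≤ n s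

/-- Cells are pairs `(i, j)` (row `i`, column `j`, both 0-based); the Young diagram
`Y_n̄` consists of the cells with `j < m` and `i < n j`.  `IsSCorner n m Rr Rc c`
says that, after removing the rows in `Rr` and the columns in `Rc` from `Y_n̄`,
the cell `c` is a corner of the remaining (renumbered) Young diagram: it is the
lowest remaining cell of its column and the leftmost remaining cell of its row. -/
def IsSCorner (n : ℕ → ℕ) (m : ℕ) (Rr Rc : Set ℕ) (c : ℕ × ℕ) : Prop :=
  c.2 < m ∧ c.1 < n c.2 ∧ c.1 ∉ Rr ∧ c.2 ∉ Rc ∧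
  (∀ i, c.1 < i → i < n c.2 → i ∈ Rr) ∧
  (∀ j, j < c.2 → j ∉ Rc → n j ≤ c.1)

/-- An execution of the thin-hook removal process on `Y_n̄`: a list of cells, each
of which is a corner of the diagram remaining after deleting the rows and columns
of the previously recorded cells, such that at the end every cell of `Y_n̄` lies
in a removed row or in a removed column (the diagram is empty). -/
def IsExec (n : ℕ → ℕ) (m : ℕ) (l : List (ℕ × ℕ)) : Prop :=
  (∀ t (ht : t < l.length),
    IsSCorner n m {i | ∃ c ∈ l.take t, c.1 = i} {j | ∃ c ∈ l.take t, c.2 = j}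
      (l.get ⟨t, ht⟩)) ∧
  (∀ i j, j < m → i < n j → (∃ c ∈ l, c.1 = i) ∨ (∃ c ∈ l, c.2 = j))

/-- `S` is the set of staircase corners of `Y_n̄`: the recorded set of some
execution of the thin-hook removal process. -/
def IsScSet (n : ℕ → ℕ) (m : ℕ) (S : Set (ℕ × ℕ)) : Prop :=
  ∃ l : List (ℕ × ℕ), IsExec n m l ∧ S = {c | c ∈ l}

/-- The partial order on staircase corners: `(i,j) ⪯ (i',j')` iff `i ≤ i'` and
`j' ≤ j` (to increase, move down and to the left). -/
def ScLE (c c' : ℕ × ℕ) : Prop := c.1 ≤ c'.1 ∧ c'.2 ≤ c.2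

/-- A DL-dense array: an array supported on the staircase corners `S` which is
order-preserving for the staircase-corner order. -/
def DLDense (S : Set (ℕ × ℕ)) (R : ℕ × ℕ → ℕ) : Prop :=
  (∀ c, c ∉ S → R c = 0) ∧ ∀ c c', c ∈ S → c' ∈ S → ScLE c c' → R c ≤ R c'

/-- Vertical weight of an array: the sum of the entries in column `j`. -/
def vrtW (n : ℕ → ℕ) (R : ℕ × ℕ → ℕ) (j : ℕ) : ℕ := ∑ i ∈ Finset.range (n j), R (i, j)

/-- Horizontal weight of an array: the sum of the entries in row `i`. -/
def horW (m : ℕ) (R : ℕ × ℕ → ℕ) (i : ℕ) : ℕ := ∑ j ∈ Finset.range m, R (i, j)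


private lemma mem_take_iff' {α : Type*} {l : List α} {t : ℕ} {c : α} :
    c ∈ l.take t ↔ ∃ s, ∃ _ : s < l.length, s < t ∧ l[s] = c := by
  rw [List.mem_iff_getElem]
  constructor
  · rintro ⟨s, hs, rfl⟩
    have hs' := hs
    rw [List.length_take, lt_inf_iff] at hs'
    exact ⟨s, hs'.2, hs'.1, List.getElem_take.symm⟩
  · rintro ⟨s, hs, hst, rfl⟩
    have hlt : s < (l.take t).length := by
      rw [List.length_take]; exact lt_inf_iff.mpr ⟨hst, hs⟩
    exact ⟨s, hlt, List.getElem_take⟩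

private lemma exec_diag {n : ℕ → ℕ} {m : ℕ} {l : List (ℕ × ℕ)} (hexec : IsExec n m l)
    {c : ℕ × ℕ} (hc : c ∈ l) : c.2 < m ∧ c.1 < n c.2 := by
  rw [List.mem_iff_getElem] at hc
  obtain ⟨t, ht, rfl⟩ := hc
  have h := hexec.1 t ht
  simp only [List.get_eq_getElem] at h
  exact ⟨h.1, h.2.1⟩

private lemma exec_row {n : ℕ → ℕ} {m : ℕ} {l : List (ℕ × ℕ)} (hexec : IsExec n m l)
    {c c' : ℕ × ℕ} (hc : c ∈ l) (hc' : c' ∈ l) (h : c.1 = c'.1) : c = c' := by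
  rw [List.mem_iff_getElem] at hc hc'
  obtain ⟨t, ht, rfl⟩ := hc
  obtain ⟨t', ht', rfl⟩ := hc'
  rcases lt_trichotomy t t' with hlt | heq | hlt
  · exfalso
    have hcor := hexec.1 t' ht'
    simp only [List.get_eq_getElem] at hcor
    exact hcor.2.2.1 ⟨l[t], mem_take_iff'.mpr ⟨t, ht, hlt, rfl⟩, h⟩
  · simp [heq]
  · exfalso
    have hcor := hexec.1 t ht
    simp only [List.get_eq_getElem] at hcor
    exact hcor.2.2.1 ⟨l[t'], mem_take_iff'.mpr ⟨t', ht', hlt, rfl⟩, h.symm⟩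

private lemma exec_key {n : ℕ → ℕ} {m : ℕ} {l : List (ℕ × ℕ)} (hexec : IsExec n m l)
    {i a j : ℕ} (hij : i < j) (hj : j < n a) (h : (i, a) ∈ l) :
    ∃ b, b < a ∧ (j, b) ∈ l := by
  rw [List.mem_iff_getElem] at h
  obtain ⟨t, ht, hget⟩ := h
  have hcor := hexec.1 t ht
  simp only [List.get_eq_getElem, hget] at hcor
  -- row j was removed before step t
  have hjRr : ∃ c ∈ l.take t, c.1 = j := hcor.2.2.2.2.1 j hij hj
  obtain ⟨c, hcmem, hc1⟩ := hjRr
  obtain ⟨i', b⟩ := c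
  simp only at hc1
  subst hc1
  obtain ⟨s, hs, hst, hgets⟩ := mem_take_iff'.mp hcmem
  have hcors := hexec.1 s hs
  simp only [List.get_eq_getElem, hgets] at hcors
  have hmem : (i', b) ∈ l := hgets ▸ List.getElem_mem hs
  refine ⟨b, ?_, hmem⟩
  -- b ≠ a
  have hne : b ≠ a := by
    intro hba; subst hba
    exact hcor.2.2.2.1 ⟨(i', b), hcmem, rfl⟩
  -- ¬ a < b
  have hnlt : ¬ a < b := by
    intro hab
    have haRc : a ∉ {j' | ∃ c ∈ l.take s, c.2 = j'} := by
      rintro ⟨e, hemem, he2⟩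
      obtain ⟨u, hu, hus, hgetu⟩ := mem_take_iff'.mp hemem
      exact hcor.2.2.2.1 ⟨e, mem_take_iff'.mpr ⟨u, hu, lt_trans hus hst, hgetu⟩, he2⟩
    have := hcors.2.2.2.2.2 a hab haRc
    omega
  omega

/-- Lemma 1.21.  For a DL-dense array `R` with column sums
`d_j = vrt(R)_j`, the column-wise partial sums `μ⁽ʲ⁾_i = Σ_{a<j} R_{i,a}` form a
chain of iterated serpentines: `μ⁽ʲ⁺¹⁾ ∈ Ser^{n_j}_{d_j, μ⁽ʲ⁾}`. -/
theorem dl_dense_gives_serpentines (m : ℕ) (hm : 0 < m)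
    (n : ℕ → ℕ) (hn0 : 0 < n 0)
    (hmono : ∀ j k, j ≤ k → k < m → n j ≤ n k)
    (S : Set (ℕ × ℕ)) (hS : IsScSet n m S)
    (R : ℕ × ℕ → ℕ) (hR : DLDense S R) :
    ∀ a, a < m →
      IsSerpentine (n a) (vrtW n R a)
        (fun i => ∑ b ∈ Finset.range a, R (i, b))
        (fun i => ∑ b ∈ Finset.range (a + 1), R (i, b)) := by
  obtain ⟨l, hexec, rfl⟩ := hS
  obtain ⟨hz, hmon⟩ := hR
  intro a ha
  have hout : ∀ i b : ℕ, n b ≤ i → R (i, b) = 0 := by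
    intro i b hb
    apply hz
    intro hc
    have := (exec_diag hexec hc).2
    simp only at this
    omega
  have key0 : ∀ i, (i, a) ∈ l → (∑ b ∈ Finset.range a, R (i, b)) = 0 := by
    intro i hi
    apply Finset.sum_eq_zero
    intro b hb
    rw [Finset.mem_range] at hb
    apply hz
    intro hc
    have := exec_row hexec hc hi rfl
    have : b = a := congrArg Prod.snd this
    omega
  refine ⟨?_, ?_, ?_, ?_, ?_, ?_⟩ <;> beta_reduce
  · intro i hi
    apply Finset.sum_eq_zero
    intro b hb
    rw [Finset.mem_range] at hb
    exact hout i b (le_trans (hmono b a (by omega) ha) hi)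
  · intro i hi
    apply Finset.sum_eq_zero
    intro b hb
    rw [Finset.mem_range] at hb
    exact hout i b (le_trans (hmono b a (by omega) ha) hi)
  · intro i
    rw [Finset.sum_range_succ]
    exact Nat.le_add_right _ _
  · have : ∀ i ∈ Finset.range (n a),
        (∑ b ∈ Finset.range (a + 1), R (i, b)) - (∑ b ∈ Finset.range a, R (i, b)) = R (i, a) := by
      intro i _
      rw [Finset.sum_range_succ]
      omega
    rw [Finset.sum_congr rfl this]
    rfl
  · intro i j hij hj hle
    by_cases hRi : R (i, a) = 0
    · rw [Finset.sum_range_succ, hRi, add_zero]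
      exact hle
    · have hiS : (i, a) ∈ l := by
        by_contra hmem
        exact hRi (hz _ hmem)
      obtain ⟨b, hba, hjb⟩ := exec_key hexec hij hj hiS
      rw [Finset.sum_range_succ, key0 i hiS, zero_add]
      calc R (i, a) ≤ R (j, b) := hmon _ _ hiS hjb ⟨le_of_lt hij, le_of_lt hba⟩
        _ ≤ ∑ b' ∈ Finset.range a, R (j, b') :=
            Finset.single_le_sum (f := fun b' => R (j, b')) (fun _ _ => Nat.zero_le _) (Finset.mem_range.mpr hba)
  · intro i j hij hj h1 h2
    by_cases hRi : R (i, a) = 0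
    · rw [Finset.sum_range_succ, hRi, add_zero]
    · have hiS : (i, a) ∈ l := by
        by_contra hmem
        exact hRi (hz _ hmem)
      rw [key0 i hiS] at h1
      omega
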